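/- Fix γ ≥ 1 and v₂ ∈ (v_min, 0) with v_min = -ℓ(0⁺). For θ₁ ∈ (0, θ^cr), let ρ₁ = ρ₁(θ₁) ∈ (0,1) be determined by ℓ(ρ₁) cos θ₁ = -v₂. Then the squared pseudo-Mach number of state (2) at the reflection point, M₂(θ₁)² = (ℓ(ρ₁)/(1-ρ₁))² (ρ₁² + cot² θ₁), is a strictly decreasing function of θ₁ ∈ (0, θ^cr), and M₂(θ₁) → ∞ as θ₁ → 0⁺. -/

import Mathlib

open Set Filter

/-- Polytropic enthalpy: `h(ρ) = (ρ^(γ-1) - 1)/(γ-1)` for `γ > 1`, `log ρ` for `γ = 1`. -/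
noncomputable def enthalpy (γ ρ : ℝ) : ℝ :=
  if γ = 1 then Real.log ρ else (ρ ^ (γ - 1) - 1) / (γ - 1)

/-- `ℓ(ρ₁, ρ₂) = sqrt(2(ρ₁-ρ₂)(h(ρ₁)-h(ρ₂))/(ρ₁+ρ₂))`; here we use `ℓ(ρ) = ℓ(ρ,1)`. -/
noncomputable def ell (γ ρ₁ ρ₂ : ℝ) : ℝ :=
  Real.sqrt (2 * (ρ₁ - ρ₂) * (enthalpy γ ρ₁ - enthalpy γ ρ₂) / (ρ₁ + ρ₂))

lemma enthalpy_one (γ : ℝ) : enthalpy γ 1 = 0 := by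
  simp only [enthalpy]; split <;> simp

lemma enthalpy_strictMonoOn {γ : ℝ} (hγ : 1 ≤ γ) :
    StrictMonoOn (enthalpy γ) (Set.Ioi (0:ℝ)) := by
  rcases eq_or_lt_of_le hγ with h | h
  · intro a ha b hb hab
    simp only [enthalpy, if_pos h.symm]
    exact Real.log_lt_log ha hab
  · intro a ha b hb hab
    simp only [enthalpy, if_neg (ne_of_gt h)]
    have := Real.rpow_lt_rpow (le_of_lt ha) hab (by linarith : (0:ℝ) < γ - 1)
    exact (div_lt_div_iff_of_pos_right (by linarith)).mpr (by linarith)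

lemma enthalpy_neg {γ ρ : ℝ} (hγ : 1 ≤ γ) (h : ρ ∈ Set.Ioo (0:ℝ) 1) :
    enthalpy γ ρ < 0 := by
  have := enthalpy_strictMonoOn hγ h.1 (by norm_num : (1:ℝ) ∈ Set.Ioi (0:ℝ)) h.2
  rwa [enthalpy_one] at this

lemma inner_pos {γ ρ : ℝ} (hγ : 1 ≤ γ) (h : ρ ∈ Set.Ioo (0:ℝ) 1) :
    0 < 2 * (ρ - 1) * (enthalpy γ ρ - enthalpy γ 1) / (ρ + 1) := by
  rw [enthalpy_one, sub_zero]
  have h1 := enthalpy_neg hγ h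
  have h2 := h.1
  have h3 := h.2
  apply div_pos (by nlinarith) (by linarith)

lemma ell_pos {γ ρ : ℝ} (hγ : 1 ≤ γ) (h : ρ ∈ Set.Ioo (0:ℝ) 1) :
    0 < ell γ ρ 1 :=
  Real.sqrt_pos.mpr (inner_pos hγ h)

lemma ell_sq {γ ρ : ℝ} (hγ : 1 ≤ γ) (h : ρ ∈ Set.Ioo (0:ℝ) 1) :
    (ell γ ρ 1) ^ 2 = 2 * (ρ - 1) * enthalpy γ ρ / (ρ + 1) := by
  rw [ell, Real.sq_sqrt (le_of_lt (inner_pos hγ h)), enthalpy_one, sub_zero]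

lemma ell_anti {γ a b : ℝ} (hγ : 1 ≤ γ) (ha : a ∈ Set.Ioo (0:ℝ) 1)
    (hb : b ∈ Set.Ioo (0:ℝ) 1) (hab : a < b) : ell γ b 1 < ell γ a 1 := by
  apply Real.sqrt_lt_sqrt (le_of_lt (inner_pos hγ hb))
  rw [enthalpy_one, sub_zero, sub_zero]
  have h1 := enthalpy_neg hγ ha
  have h2 := enthalpy_neg hγ hb
  have h3 := enthalpy_strictMonoOn hγ ha.1 hb.1 hab
  have ha1 := ha.1; have ha2 := ha.2; have hb1 := hb.1; have hb2 := hb.2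
  rw [div_lt_div_iff₀ (by linarith) (by linarith)]
  have huv : (1 - b) * (-enthalpy γ b) < (1 - a) * (-enthalpy γ a) := by nlinarith
  nlinarith [mul_pos (show (0:ℝ) < 1 - b by linarith) (show (0:ℝ) < -enthalpy γ b by linarith),
    mul_pos (show (0:ℝ) < 1 - a by linarith) (show (0:ℝ) < -enthalpy γ a by linarith)]


-- γ = 1 model case
lemma K1_mono : MonotoneOn (fun ρ : ℝ => ρ ^ 2 * (-Real.log ρ) / (1 - ρ ^ 2)) (Set.Ioo (0:ℝ) 1) := by
  have key : ∀ x ∈ Set.Ioo (0:ℝ) 1,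
      HasDerivAt (fun ρ : ℝ => ρ ^ 2 * (-Real.log ρ) / (1 - ρ ^ 2))
        (((2 * x * (-Real.log x) + x ^ 2 * (-x⁻¹)) * (1 - x ^ 2)
          - x ^ 2 * (-Real.log x) * (-(2 * x))) / (1 - x ^ 2) ^ 2) x := by
    intro x hx
    have hx0 : x ≠ 0 := ne_of_gt hx.1
    have hden : 1 - x ^ 2 ≠ 0 := by nlinarith [hx.1, hx.2]
    have hnum : HasDerivAt (fun ρ : ℝ => ρ ^ 2 * (-Real.log ρ))
        (2 * x * (-Real.log x) + x ^ 2 * (-x⁻¹)) x := by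
      have h1 : HasDerivAt (fun ρ : ℝ => ρ ^ 2) (2 * x) x := by
        simpa using hasDerivAt_pow 2 x
      exact h1.mul ((Real.hasDerivAt_log hx0).neg)
    have hd : HasDerivAt (fun ρ : ℝ => 1 - ρ ^ 2) (-(2 * x)) x := by
      simpa using ((hasDerivAt_pow 2 x).const_sub 1)
    exact hnum.div hd hden
  apply monotoneOn_of_deriv_nonneg (convex_Ioo 0 1)
  · intro x hx
    exact ((key x hx).differentiableAt).continuousAt.continuousWithinAt
  · rw [interior_Ioo]
    intro x hx
    exact ((key x hx).differentiableAt).differentiableWithinAt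
  · rw [interior_Ioo]
    intro x hx
    rw [(key x hx).deriv]
    have hx1 := hx.1; have hx2 := hx.2
    apply div_nonneg _ (by positivity)
    have hlog := Real.log_le_sub_one_of_pos (show (0:ℝ) < x ^ 2 by positivity)
    rw [Real.log_pow] at hlog
    have e : x ^ 2 * -x⁻¹ = -x := by field_simp
    rw [e]
    push_cast at hlog
    nlinarith [mul_nonneg hx1.le (show (0:ℝ) ≤ x ^ 2 - 1 - 2 * Real.log x by linarith)]

-- γ > 1 model case, with g = γ - 1 > 0
lemma Kg_mono {g : ℝ} (hg : 0 < g) :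
    MonotoneOn (fun ρ : ℝ => ρ ^ 2 * (-((ρ ^ g - 1) / g)) / (1 - ρ ^ 2)) (Set.Ioo (0:ℝ) 1) := by
  have key : ∀ x ∈ Set.Ioo (0:ℝ) 1,
      HasDerivAt (fun ρ : ℝ => ρ ^ 2 * (-((ρ ^ g - 1) / g)) / (1 - ρ ^ 2))
        (((2 * x * (-((x ^ g - 1) / g)) + x ^ 2 * (-(g * x ^ (g - 1) / g))) * (1 - x ^ 2)
          - x ^ 2 * (-((x ^ g - 1) / g)) * (-(2 * x))) / (1 - x ^ 2) ^ 2) x := by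
    intro x hx
    have hx0 : x ≠ 0 := ne_of_gt hx.1
    have hden : 1 - x ^ 2 ≠ 0 := by nlinarith [hx.1, hx.2]
    have h1 : HasDerivAt (fun ρ : ℝ => ρ ^ 2) (2 * x) x := by
      simpa using hasDerivAt_pow 2 x
    have h2 : HasDerivAt (fun ρ : ℝ => ρ ^ g) (g * x ^ (g - 1)) x :=
      Real.hasDerivAt_rpow_const (Or.inl hx0)
    have hq : HasDerivAt (fun ρ : ℝ => -((ρ ^ g - 1) / g)) (-(g * x ^ (g - 1) / g)) x :=
      ((h2.sub_const 1).div_const g).neg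
    have hd : HasDerivAt (fun ρ : ℝ => 1 - ρ ^ 2) (-(2 * x)) x := by
      simpa using ((hasDerivAt_pow 2 x).const_sub 1)
    exact (h1.mul hq).div hd hden
  apply monotoneOn_of_deriv_nonneg (convex_Ioo 0 1)
  · intro x hx
    exact ((key x hx).differentiableAt).continuousAt.continuousWithinAt
  · rw [interior_Ioo]
    intro x hx
    exact ((key x hx).differentiableAt).differentiableWithinAt
  · rw [interior_Ioo]
    intro x hx
    rw [(key x hx).deriv]
    have hx1 := hx.1; have hx2 := hx.2
    have hx0 : x ≠ 0 := ne_of_gt hx1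
    apply div_nonneg _ (by positivity)
    have hpow : x ^ (g - 1) * x = x ^ g := by
      nth_rewrite 2 [← Real.rpow_one x]
      rw [← Real.rpow_add hx1]
      ring_nf
    have hpow' : x ^ (g - 1) = x ^ g / x := by
      rw [eq_div_iff hx0]; exact hpow
    have hxg : (0:ℝ) < x ^ g := Real.rpow_pos_of_pos hx1 g
    -- AM-GM : (g+2) * x^g ≤ 2 + g * (x^g * x^2)
    have hg2 : (0:ℝ) < g + 2 := by linarith
    have amgm := Real.geom_mean_le_arith_mean2_weighted
      (show (0:ℝ) ≤ 2 / (g + 2) by positivity)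
      (show (0:ℝ) ≤ g / (g + 2) by positivity)
      (show (0:ℝ) ≤ 1 by norm_num)
      (show (0:ℝ) ≤ x ^ (g + 2) from (Real.rpow_pos_of_pos hx1 _).le)
      (show 2 / (g + 2) + g / (g + 2) = 1 by field_simp; ring)
    have hcollapse : (x ^ (g + 2)) ^ (g / (g + 2)) = x ^ g := by
      rw [← Real.rpow_mul hx1.le, show (g + 2) * (g / (g + 2)) = g from by field_simp]
    have hsplit : x ^ (g + 2) = x ^ g * x ^ 2 := by
      rw [Real.rpow_add hx1, show x ^ (2:ℝ) = x ^ 2 from by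
        rw [show (2:ℝ) = ((2:ℕ):ℝ) by norm_num, Real.rpow_natCast]]
    rw [Real.one_rpow, one_mul, hcollapse, hsplit] at amgm
    have hcomb : 2 / (g + 2) * 1 + g / (g + 2) * (x ^ g * x ^ 2)
        = (2 + g * (x ^ g * x ^ 2)) / (g + 2) := by ring
    rw [hcomb, le_div_iff₀ hg2] at amgm
    -- amgm : x ^ g * (g + 2) ≤ 2 + g * (x ^ g * x ^ 2)
    rw [hpow']
    have e : (2 * x * (-((x ^ g - 1) / g)) + x ^ 2 * (-(g * (x ^ g / x) / g))) * (1 - x ^ 2)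
        - x ^ 2 * (-((x ^ g - 1) / g)) * (-(2 * x))
        = x * ((2 + g * (x ^ g * x ^ 2)) - (g + 2) * x ^ g) / g := by
      field_simp
      ring
    rw [e]
    exact div_nonneg (mul_nonneg hx1.le (by nlinarith)) hg.le


lemma K_mono {γ : ℝ} (hγ : 1 ≤ γ) :
    MonotoneOn (fun ρ : ℝ => ρ ^ 2 * (-enthalpy γ ρ) / (1 - ρ ^ 2)) (Set.Ioo (0:ℝ) 1) := by
  rcases eq_or_lt_of_le hγ with h | h
  · intro a ha b hb hab
    have e : ∀ ρ : ℝ, enthalpy γ ρ = Real.log ρ := fun ρ => by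
      simp [enthalpy, if_pos h.symm]
    simp only [e]
    exact K1_mono ha hb hab
  · intro a ha b hb hab
    have e : ∀ ρ : ℝ, enthalpy γ ρ = (ρ ^ (γ - 1) - 1) / (γ - 1) := fun ρ => by
      simp [enthalpy, if_neg h.ne']
    simp only [e]
    exact Kg_mono (by linarith : (0:ℝ) < γ - 1) ha hb hab

lemma sq_prod_lt {s s' a a' : ℝ} (hs : 0 < s) (hss' : s < s')
    (ha : 0 < a) (haa' : a < a') : s ^ 2 * a ^ 2 < s' ^ 2 * a' ^ 2 := by
  have h1 : s * a < s' * a' := mul_lt_mul'' hss' haa' hs.le ha.le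
  nlinarith [mul_self_lt_mul_self (mul_nonneg hs.le ha.le) h1]

lemma main_ineq {γ v₂ ρ ρ' c c' s s' : ℝ} (hγ : 1 ≤ γ) (hv : v₂ < 0)
    (hρ : ρ ∈ Set.Ioo (0:ℝ) 1) (hρ' : ρ' ∈ Set.Ioo (0:ℝ) 1)
    (hs : 0 < s) (hss' : s < s') (hρρ' : ρ' < ρ)
    (hcomp : ell γ ρ 1 * c = -v₂) (hcomp' : ell γ ρ' 1 * c' = -v₂) :
    (ell γ ρ' 1 / (1 - ρ')) ^ 2 * (ρ' ^ 2 + (c' / s') ^ 2)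
      < (ell γ ρ 1 / (1 - ρ)) ^ 2 * (ρ ^ 2 + (c / s) ^ 2) := by
  have h01 := hρ.1; have h02 := hρ.2
  have h01' := hρ'.1; have h02' := hρ'.2
  have hs' : 0 < s' := lt_trans hs hss'
  have hne : (1:ℝ) - ρ ≠ 0 := by linarith
  have hne' : (1:ℝ) - ρ' ≠ 0 := by linarith
  have e1 : (ell γ ρ 1 / (1 - ρ)) ^ 2 * (ρ ^ 2 + (c / s) ^ 2)
      = (ell γ ρ 1) ^ 2 * ρ ^ 2 / (1 - ρ) ^ 2 + (ell γ ρ 1 * c) ^ 2 / (s ^ 2 * (1 - ρ) ^ 2) := by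
    field_simp
  have e1' : (ell γ ρ' 1 / (1 - ρ')) ^ 2 * (ρ' ^ 2 + (c' / s') ^ 2)
      = (ell γ ρ' 1) ^ 2 * ρ' ^ 2 / (1 - ρ') ^ 2
        + (ell γ ρ' 1 * c') ^ 2 / (s' ^ 2 * (1 - ρ') ^ 2) := by
    field_simp
  rw [e1, e1', hcomp, hcomp']
  have hA : (ell γ ρ 1) ^ 2 * ρ ^ 2 / (1 - ρ) ^ 2
      = 2 * (ρ ^ 2 * (-enthalpy γ ρ) / (1 - ρ ^ 2)) := by
    rw [ell_sq hγ hρ]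
    have hne2 : ρ + 1 ≠ 0 := by linarith
    have hne3 : (1:ℝ) - ρ ^ 2 ≠ 0 := by nlinarith
    field_simp
    ring
  have hA' : (ell γ ρ' 1) ^ 2 * ρ' ^ 2 / (1 - ρ') ^ 2
      = 2 * (ρ' ^ 2 * (-enthalpy γ ρ') / (1 - ρ' ^ 2)) := by
    rw [ell_sq hγ hρ']
    have hne2 : ρ' + 1 ≠ 0 := by linarith
    have hne3 : (1:ℝ) - ρ' ^ 2 ≠ 0 := by nlinarith
    field_simp
    ring
  rw [hA, hA']
  have hK := K_mono hγ hρ' hρ (le_of_lt hρρ')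
  dsimp only at hK
  have hprod : s ^ 2 * (1 - ρ) ^ 2 < s' ^ 2 * (1 - ρ') ^ 2 :=
    sq_prod_lt hs hss' (by linarith) (by linarith)
  have hB : (-v₂) ^ 2 / (s' ^ 2 * (1 - ρ') ^ 2) < (-v₂) ^ 2 / (s ^ 2 * (1 - ρ) ^ 2) :=
    div_lt_div_of_pos_left (pow_pos (by linarith : (0:ℝ) < -v₂) 2)
      (by positivity) hprod
  exact add_lt_add_of_le_of_lt (by linarith) hB

/-- Fix `γ ≥ 1`, `v₂ ∈ (v_min, 0)`, and a critical angle `θ^cr ∈ (0, π/2]`.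
For `θ₁ ∈ (0, θ^cr)`, let `ρ₁ = ρ₁(θ₁) ∈ (0,1)` be determined by the compatibility
condition `ℓ(ρ₁) cos θ₁ = -v₂`. Then the squared pseudo-Mach number
`M₂(θ₁)² = (ℓ(ρ₁)/(1-ρ₁))²(ρ₁² + cot²θ₁)` is strictly decreasing on `(0, θ^cr)`,
and `M₂(θ₁) → ∞` as `θ₁ → 0⁺`. -/
theorem machNumber_strictAnti_and_tendsto_atTop
    (γ v₂ θcr : ℝ) (hγ : 1 ≤ γ) (hv : v₂ < 0)
    (hθcr₀ : 0 < θcr) (hθcr₁ : θcr ≤ Real.pi / 2)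
    (ρ₁ : ℝ → ℝ)
    (hρ₁ : ∀ θ ∈ Set.Ioo 0 θcr,
      ρ₁ θ ∈ Set.Ioo (0 : ℝ) 1 ∧ ell γ (ρ₁ θ) 1 * Real.cos θ = -v₂) :
    StrictAntiOn
      (fun θ => (ell γ (ρ₁ θ) 1 / (1 - ρ₁ θ)) ^ 2 *
        ((ρ₁ θ) ^ 2 + (Real.cos θ / Real.sin θ) ^ 2))
      (Set.Ioo 0 θcr) ∧
    Filter.Tendsto
      (fun θ => (ell γ (ρ₁ θ) 1 / (1 - ρ₁ θ)) *
        Real.sqrt ((ρ₁ θ) ^ 2 + (Real.cos θ / Real.sin θ) ^ 2))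
      (nhdsWithin 0 (Set.Ioo 0 θcr)) Filter.atTop := by
  have hπ := Real.pi_pos
  constructor
  · intro θ hθ θ' hθ' hlt
    obtain ⟨hρθ, hcomp⟩ := hρ₁ θ hθ
    obtain ⟨hρθ', hcomp'⟩ := hρ₁ θ' hθ'
    have hθ1 := hθ.1; have hθ2 := hθ.2
    have hθ'1 := hθ'.1; have hθ'2 := hθ'.2
    have hc : 0 < Real.cos θ :=
      Real.cos_pos_of_mem_Ioo ⟨by linarith, by linarith⟩
    have hc' : 0 < Real.cos θ' :=
      Real.cos_pos_of_mem_Ioo ⟨by linarith, by linarith⟩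
    have hs : 0 < Real.sin θ := Real.sin_pos_of_pos_of_lt_pi hθ1 (by linarith)
    have hss' : Real.sin θ < Real.sin θ' :=
      Real.strictMonoOn_sin ⟨by linarith, by linarith⟩ ⟨by linarith, by linarith⟩ hlt
    have hcc' : Real.cos θ' < Real.cos θ :=
      Real.strictAntiOn_cos ⟨by linarith, by linarith⟩ ⟨by linarith, by linarith⟩ hlt
    have hL : 0 < ell γ (ρ₁ θ) 1 := ell_pos hγ hρθ
    have hL' : 0 < ell γ (ρ₁ θ') 1 := ell_pos hγ hρθ'
    have hLL' : ell γ (ρ₁ θ) 1 < ell γ (ρ₁ θ') 1 := by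
      have h1 : ell γ (ρ₁ θ) 1 * Real.cos θ' < ell γ (ρ₁ θ) 1 * Real.cos θ :=
        mul_lt_mul_of_pos_left hcc' hL
      rw [hcomp, ← hcomp'] at h1
      exact lt_of_mul_lt_mul_right h1 hc'.le
    have hρρ' : ρ₁ θ' < ρ₁ θ := by
      rcases lt_trichotomy (ρ₁ θ') (ρ₁ θ) with h | h | h
      · exact h
      · rw [h] at hLL'; exact absurd hLL' (lt_irrefl _)
      · exact absurd (ell_anti hγ hρθ hρθ' h) (by linarith)
    exact main_ineq hγ hv hρθ hρθ' hs hss' hρρ' hcomp hcomp'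
  · have hbound : ∀ θ ∈ Set.Ioo (0:ℝ) θcr, -v₂ / Real.sin θ ≤
        (ell γ (ρ₁ θ) 1 / (1 - ρ₁ θ)) *
          Real.sqrt ((ρ₁ θ) ^ 2 + (Real.cos θ / Real.sin θ) ^ 2) := by
      intro θ hθ
      obtain ⟨hρθ, hcomp⟩ := hρ₁ θ hθ
      have hθ1 := hθ.1; have hθ2 := hθ.2
      have h01 := hρθ.1; have h02 := hρθ.2
      have hc : 0 < Real.cos θ :=
        Real.cos_pos_of_mem_Ioo ⟨by linarith, by linarith⟩
      have hs : 0 < Real.sin θ := Real.sin_pos_of_pos_of_lt_pi hθ1 (by linarith)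
      have hL : 0 < ell γ (ρ₁ θ) 1 := ell_pos hγ hρθ
      have hcs : 0 ≤ Real.cos θ / Real.sin θ := le_of_lt (div_pos hc hs)
      have hsqrt : Real.cos θ / Real.sin θ ≤
          Real.sqrt ((ρ₁ θ) ^ 2 + (Real.cos θ / Real.sin θ) ^ 2) := by
        rw [show Real.cos θ / Real.sin θ = Real.sqrt ((Real.cos θ / Real.sin θ) ^ 2) from
          (Real.sqrt_sq hcs).symm]
        apply Real.sqrt_le_sqrt
        nlinarith [sq_nonneg (ρ₁ θ), Real.sq_sqrt (sq_nonneg (Real.cos θ / Real.sin θ))]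
      have hLle : ell γ (ρ₁ θ) 1 ≤ ell γ (ρ₁ θ) 1 / (1 - ρ₁ θ) := by
        rw [le_div_iff₀ (by linarith)]
        nlinarith
      calc -v₂ / Real.sin θ = ell γ (ρ₁ θ) 1 * (Real.cos θ / Real.sin θ) := by
            rw [← hcomp]; ring
        _ ≤ (ell γ (ρ₁ θ) 1 / (1 - ρ₁ θ)) *
              Real.sqrt ((ρ₁ θ) ^ 2 + (Real.cos θ / Real.sin θ) ^ 2) := by
            exact mul_le_mul hLle hsqrt hcs
              (le_of_lt (div_pos hL (by linarith : (0:ℝ) < 1 - ρ₁ θ)))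
    have hsin : Filter.Tendsto Real.sin (nhdsWithin 0 (Set.Ioo 0 θcr)) (nhdsWithin 0 (Set.Ioi 0)) := by
      apply tendsto_nhdsWithin_of_tendsto_nhds_of_eventually_within
      · have : Filter.Tendsto Real.sin (nhdsWithin 0 (Set.Ioo 0 θcr)) (nhds (Real.sin 0)) :=
          (Real.continuous_sin.tendsto 0).mono_left nhdsWithin_le_nhds
        rwa [Real.sin_zero] at this
      · filter_upwards [eventually_mem_nhdsWithin] with θ hθ
        exact Real.sin_pos_of_pos_of_lt_pi hθ.1 (by linarith [hθ.2])
    have hinv : Filter.Tendsto (fun θ => (Real.sin θ)⁻¹)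
        (nhdsWithin 0 (Set.Ioo 0 θcr)) Filter.atTop :=
      tendsto_inv_nhdsGT_zero.comp hsin
    have hmain : Filter.Tendsto (fun θ => -v₂ / Real.sin θ)
        (nhdsWithin 0 (Set.Ioo 0 θcr)) Filter.atTop := by
      simp only [div_eq_mul_inv]
      exact Filter.Tendsto.const_mul_atTop (by linarith) hinv
    apply tendsto_atTop_mono' _ _ hmain
    filter_upwards [eventually_mem_nhdsWithin] with θ hθ
    exact hbound θ hθ
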